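/- arXiv:2301.12955 — 7 statements merged into one kernel-verified Lean document; each statement's English description precedes it below -/
import Mathlib

section
/- Let R be a commutative ring, M a finitely generated R-module, {m_1,…,m_n} a linearly independent subset of M of cardinality n, and {p_1,…,p_n} a generating set of M of the same cardinality n. Then M is free and {p_1,…,p_n} is a basis of M. -/
theorem generators_are_basis_of_indep_same_card {R M : Type*} [CommRing R] [Nontrivial R]
    [AddCommGroup M] [Module R M] [Module.Finite R M] (n : ℕ)
    (m : Fin n → M) (p : Fin n → M)
    (hm : LinearIndependent R m)
    (hp : Submodule.span R (Set.range p) = ⊤) :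
    Module.Free R M ∧ ∃ b : Module.Basis (Fin n) R M, ∀ i, b i = p i := by
  have hsurj : Function.Surjective (Finsupp.linearCombination R p) := by
    rw [← LinearMap.range_eq_top, Finsupp.range_linearCombination, hp]
  have hinj : Function.Injective (Finsupp.linearCombination R p) :=
    OrzechProperty.injective_of_surjective_of_injective
      (Finsupp.linearCombination R m) (Finsupp.linearCombination R p) hm hsurj
  have hpli : LinearIndependent R p := hinj
  let b : Module.Basis (Fin n) R M := Module.Basis.mk hpli hp.ge
  exact ⟨Module.Free.of_basis b, b, fun i => Module.Basis.mk_apply hpli hp.ge i⟩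
end

section
/- Let R be a Bézout domain and M ⊆ R^n a finitely generated submodule. Then M is a free R-module. -/
open LinearMap Submodule

set_option maxHeartbeats 1000000
set_option synthInstance.maxHeartbeats 400000

/-- A fg submodule contained in the kernel of the last-coordinate projection is free,
given the inductive hypothesis for `n`. -/
private lemma bezout_aux_ker {R : Type*} [CommRing R] [IsDomain R] [IsBezout R] {n : ℕ}
    (ih : ∀ N : Submodule R (Fin n → R), N.FG → Module.Free R N)
    (K : Submodule R (Fin (n + 1) → R))
    (hK : K ≤ LinearMap.ker (LinearMap.proj (R := R) (Fin.last n)))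
    (hKfg : K.FG) : Module.Free R K := by
  set f : (Fin (n + 1) → R) →ₗ[R] (Fin n → R) := LinearMap.funLeft R R Fin.castSucc with hf
  have hinj : Function.Injective (f.comp K.subtype) := by
    rw [← LinearMap.ker_eq_bot, LinearMap.ker_eq_bot']
    rintro ⟨x, hx⟩ hx0
    have h1 : ∀ i : Fin n, x (Fin.castSucc i) = 0 := fun i => congrFun hx0 i
    have h2 : x (Fin.last n) = 0 := hK hx
    refine Subtype.ext (funext fun j => ?_)
    exact Fin.lastCases (motive := fun j => x j = 0) h2 h1 j
  have hmap : LinearMap.range (f.comp K.subtype) = K.map f := by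
    rw [LinearMap.range_comp, Submodule.range_subtype]
  haveI : Module.Free R (K.map f) := ih _ (Submodule.FG.map f hKfg)
  exact Module.Free.of_equiv
    ((LinearEquiv.ofInjective (f.comp K.subtype) hinj).trans
      (LinearEquiv.ofEq _ _ hmap)).symm

private lemma bezout_aux {R : Type*} [CommRing R] [IsDomain R] [IsBezout R] :
    ∀ n : ℕ, ∀ M : Submodule R (Fin n → R), M.FG → Module.Free R M := by
  intro n
  induction n with
  | zero =>
    intro M _
    haveI : Subsingleton (Fin 0 → R) := ⟨fun a b => funext fun i => i.elim0⟩
    haveI : Subsingleton M := ⟨fun a b => Subtype.ext (Subsingleton.elim _ _)⟩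
    infer_instance
  | succ n ih =>
    intro M hfg
    haveI : Module.Finite R M := Module.Finite.iff_fg.mpr hfg
    set π : M →ₗ[R] R := (LinearMap.proj (Fin.last n)).comp M.subtype with hπ
    set I : Submodule R R := LinearMap.range π with hI
    -- I is a fg ideal, hence principal, hence free
    haveI : Module.Finite R I := Module.Finite.range π
    have hIfg : I.FG := Module.Finite.iff_fg.mp ‹_›
    obtain ⟨a, ha⟩ := (IsBezout.isPrincipal_of_FG (I : Ideal R) hIfg).1
    haveI hIfree : Module.Free R I := by
      by_cases h0 : a = 0
      · subst h0
        have : I = ⊥ := by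
          rw [ha]; exact Submodule.span_zero_singleton R
        rw [this]
        infer_instance
      · have e : R ≃ₗ[R] (R ∙ a) := LinearEquiv.toSpanNonzeroSingleton R R a h0
        have h : (R ∙ a) = I := by rw [ha]
        exact Module.Free.of_equiv (e.trans (LinearEquiv.ofEq _ _ h))
    -- split the surjection M → I
    obtain ⟨s, hs⟩ := Module.projective_lifting_property π.rangeRestrict LinearMap.id
      π.surjective_rangeRestrict
    have hs' : ∀ y, π.rangeRestrict (s y) = y := by
      intro y
      have h := LinearMap.congr_fun hs y
      simpa only [LinearMap.comp_apply, LinearMap.id_apply] using h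
    have hsinj : Function.Injective s := by
      intro x y hxy
      rw [← hs' x, ← hs' y, hxy]
    set g : M →ₗ[R] LinearMap.range s := s.rangeRestrict.comp π.rangeRestrict with hg
    have hproj : ∀ x : LinearMap.range s, g x = x := by
      rintro ⟨-, y, rfl⟩
      apply Subtype.ext
      show (s (π.rangeRestrict (s y)) : M) = s y
      rw [hs' y]
    have hcompl : IsCompl (LinearMap.range s) (LinearMap.ker g) :=
      LinearMap.isCompl_of_proj hproj
    -- kernel of g is kernel of π
    have hkerg : LinearMap.ker g = LinearMap.ker π := by
      have h1 : LinearMap.ker s.rangeRestrict = ⊥ :=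
        by rw [LinearMap.ker_rangeRestrict]; exact LinearMap.ker_eq_bot.mpr hsinj
      rw [hg, LinearMap.ker_comp, h1, Submodule.comap_bot, LinearMap.ker_rangeRestrict]
    -- ker g is finite (direct summand of M)
    haveI hfinker : Module.Finite R (LinearMap.ker g) := by
      refine Module.Finite.of_surjective
        ((LinearMap.ker g).linearProjOfIsCompl _ hcompl.symm) (fun x => ⟨x, ?_⟩)
      exact Submodule.linearProjOfIsCompl_apply_left hcompl.symm x
    -- identify ker π with a submodule of Fin (n+1) → R contained in ker proj
    set K : Submodule R (Fin (n + 1) → R) :=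
      M ⊓ LinearMap.ker (LinearMap.proj (R := R) (Fin.last n)) with hKdef
    have hker_eq : LinearMap.ker π = Submodule.comap M.subtype K := by
      rw [hKdef, Submodule.comap_inf, Submodule.comap_subtype_self, top_inf_eq, hπ,
        LinearMap.ker_comp]
    have eK : LinearMap.ker π ≃ₗ[R] K :=
      (LinearEquiv.ofEq _ _ hker_eq).trans (Submodule.comapSubtypeEquivOfLe inf_le_left)
    haveI : Module.Finite R K := Module.Finite.equiv ((LinearEquiv.ofEq _ _ hkerg).trans eK)
    have hKfg : K.FG := Module.Finite.iff_fg.mp ‹_›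
    haveI : Module.Free R K := bezout_aux_ker ih K inf_le_right hKfg
    haveI : Module.Free R (LinearMap.ker g) :=
      Module.Free.of_equiv ((LinearEquiv.ofEq _ _ hkerg).trans eK).symm
    haveI : Module.Free R (LinearMap.range s) :=
      Module.Free.of_equiv (LinearEquiv.ofInjective s hsinj)
    exact Module.Free.of_equiv (Submodule.prodEquivOfIsCompl _ _ hcompl)

theorem bezout_fg_submodule_free {R : Type*} [CommRing R] [IsDomain R] [IsBezout R]
    (n : ℕ) (M : Submodule R (Fin n → R)) (hfg : M.FG) :
    Module.Free R M := bezout_aux n M hfg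
end

section
/- Let R be an integral domain such that every matrix over R admits a Smith normal form (an elementary divisor domain), with field of fractions G. For every G-subspace V ⊆ G^n, the R-module M = V ∩ R^n is free and admits a basis whose elements are the columns of a left-invertible matrix Q ∈ R^{n×p} (i.e., L Q = I_p for some L ∈ R^{p×n}). -/
open Matrix Submodule

lemma aux_mulVec_mem_span {S : Type*} [CommRing S] {n d : ℕ} (h : d ≤ n)
    (U : Matrix (Fin n) (Fin n) S) (w : Fin n → S)
    (hw : ∀ i : Fin n, d ≤ (i : ℕ) → w i = 0) :
    U *ᵥ w ∈ Submodule.span S (Set.range fun j : Fin d => U.transpose (Fin.castLE h j)) := by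
  have hrep : U *ᵥ w = ∑ i, w i • U.transpose i := by
    funext k
    simp [Matrix.mulVec, dotProduct, Finset.sum_apply, mul_comm]
  rw [hrep]
  refine Submodule.sum_mem _ fun i _ => ?_
  by_cases hc : (i : ℕ) < d
  · exact Submodule.smul_mem _ _ (Submodule.subset_span ⟨⟨(i : ℕ), hc⟩, rfl⟩)
  · rw [hw i (le_of_not_gt hc), zero_smul]
    exact Submodule.zero_mem _

lemma aux_mulVec_dite {S : Type*} [CommRing S] {n d : ℕ} (h : d ≤ n)
    (U : Matrix (Fin n) (Fin n) S) (g : Fin d → S) :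
    U *ᵥ (fun i : Fin n => if hh : (i : ℕ) < d then g ⟨i, hh⟩ else 0)
      = ∑ j : Fin d, g j • U.transpose (Fin.castLE h j) := by
  funext k
  rw [Finset.sum_apply]
  simp only [Matrix.mulVec, dotProduct, Pi.smul_apply, Matrix.transpose_apply, smul_eq_mul]
  have hsub : (Finset.univ.image (Fin.castLE h) : Finset (Fin n)) ⊆ Finset.univ :=
    Finset.subset_univ _
  rw [← Finset.sum_subset hsub ?_]
  · rw [Finset.sum_image (fun a _ b _ hab => Fin.castLE_injective h hab)]
    refine Finset.sum_congr rfl fun j _ => ?_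
    rw [dif_pos (show ((Fin.castLE h j : Fin n) : ℕ) < d from j.isLt), mul_comm]
    congr 1
  · intro i _ hi
    rw [dif_neg, mul_zero]
    intro hlt
    exact hi (Finset.mem_image.mpr ⟨⟨(i : ℕ), hlt⟩, Finset.mem_univ _, Fin.ext rfl⟩)

set_option maxHeartbeats 2000000 in
theorem edd_intersection_free_invertible_basis {R : Type*} [CommRing R] [IsDomain R]
    (hEDD : ∀ (m n : ℕ) (A : Matrix (Fin m) (Fin n) R),
      ∃ (U : Matrix (Fin m) (Fin m) R) (V : Matrix (Fin n) (Fin n) R)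
        (S : Matrix (Fin m) (Fin n) R),
        IsUnit U.det ∧ IsUnit V.det ∧ A = U * S * V ∧
        (∀ (i : Fin m) (j : Fin n), (i : ℕ) ≠ (j : ℕ) → S i j = 0) ∧
        (∀ (i : Fin m) (j : Fin n) (i' : Fin m) (j' : Fin n),
          (i : ℕ) = (j : ℕ) → (i' : ℕ) = (i : ℕ) + 1 → (j' : ℕ) = (j : ℕ) + 1 →
          S i j ∣ S i' j'))
    (n : ℕ) (V : Subspace (FractionRing R) (Fin n → FractionRing R)) :
    Module.Free R (Submodule.comap
      (LinearMap.pi fun i => (Algebra.linearMap R (FractionRing R)).comp (LinearMap.proj i))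
      (V.restrictScalars R)) ∧
    ∃ (p : ℕ) (Q : Matrix (Fin n) (Fin p) R) (L : Matrix (Fin p) (Fin n) R),
      L * Q = 1 ∧ LinearIndependent R Q.transpose ∧
      Submodule.span R (Set.range Q.transpose) =
        Submodule.comap
          (LinearMap.pi fun i => (Algebra.linearMap R (FractionRing R)).comp (LinearMap.proj i))
          (V.restrictScalars R) := by
  classical
  set G := FractionRing R with hG
  set f : (Fin n → R) →ₗ[R] (Fin n → G) :=
    LinearMap.pi fun i => (Algebra.linearMap R G).comp (LinearMap.proj i) with hf
  set φ := algebraMap R G with hφ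
  have hfapp : ∀ (x : Fin n → R) (i : Fin n), f x i = φ (x i) := fun x i => rfl
  set d := Module.finrank G ↥V with hd
  have hdn : d ≤ n := by
    have h1 := Submodule.finrank_le V
    simpa using h1
  set b := Module.finBasis G ↥V with hb
  -- clear denominators
  have hden : ∀ j : Fin d, ∃ c : nonZeroDivisors R, ∀ i : Fin n,
      ∃ r : R, φ r = (c : R) • (b j : Fin n → G) i := by
    intro j
    obtain ⟨c, hc⟩ := IsLocalization.exist_integer_multiples (nonZeroDivisors R)
      Finset.univ (fun i : Fin n => (b j : Fin n → G) i)
    exact ⟨c, fun i => hc i (Finset.mem_univ i)⟩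
  choose c A hA using hden
  set A' : Matrix (Fin n) (Fin d) R := Matrix.of (fun i j => A j i) with hA'
  obtain ⟨U, W, Smat, hU, hW, hAeq, hSdiag, -⟩ := hEDD n d A'
  have hUinv : U⁻¹ * U = 1 := Matrix.nonsing_inv_mul U hU
  have hUinv' : U * U⁻¹ = 1 := Matrix.mul_nonsing_inv U hU
  set col : Fin d → (Fin n → G) := fun j => (U.map φ).transpose (Fin.castLE hdn j) with hcol
  -- V = span of cols
  have hVeqb : Submodule.span G (Set.range fun j => ((b j : Fin n → G))) = V := by
    have h2 := congrArg (Submodule.map V.subtype) b.span_eq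
    rwa [Submodule.map_span, Submodule.map_top, Submodule.range_subtype,
      ← Set.range_comp] at h2
  have hVle : V ≤ Submodule.span G (Set.range col) := by
    rw [← hVeqb]
    refine Submodule.span_le.mpr ?_
    rintro - ⟨j, rfl⟩
    set w : Fin n → G := (Smat.map φ * W.map φ) *ᵥ Pi.single j 1 with hw
    have hw0 : ∀ i : Fin n, d ≤ (i : ℕ) → w i = 0 := by
      intro i hi
      have hrow : ∀ m : Fin d, Smat i m = 0 := fun m =>
        hSdiag i m (by omega)
      simp [hw, Matrix.mulVec, dotProduct, Matrix.mul_apply, hrow]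
    have h3 : (U.map φ) *ᵥ w ∈ Submodule.span G (Set.range col) :=
      aux_mulVec_mem_span hdn (U.map φ) w hw0
    have h4 : (U.map φ) *ᵥ w = fun i => φ ((c j : R)) * (b j : Fin n → G) i := by
      rw [hw, Matrix.mulVec_mulVec, ← Matrix.map_mul, ← Matrix.map_mul, ← Matrix.mul_assoc, ← hAeq]
      funext i
      simp only [Matrix.mulVec, dotProduct, Matrix.map_apply]
      rw [Finset.sum_eq_single j]
      · rw [Pi.single_eq_same, mul_one, hA', Matrix.of_apply, hA j i, Algebra.smul_def]
      · intro m _ hm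
        rw [Pi.single_eq_of_ne hm, mul_zero]
      · intro hj; exact absurd (Finset.mem_univ j) hj
    have hcj : φ (c j : R) ≠ 0 :=
      IsFractionRing.to_map_ne_zero_of_mem_nonZeroDivisors (c j).2
    have h5 : φ ((c j : R)) • (b j : Fin n → G) ∈ Submodule.span G (Set.range col) := by
      rw [show φ ((c j : R)) • (b j : Fin n → G)
          = fun i => φ ((c j : R)) * (b j : Fin n → G) i from rfl, ← h4]
      exact h3
    have h6 := Submodule.smul_mem _ (φ ((c j : R)))⁻¹ h5
    rwa [smul_smul, inv_mul_cancel₀ hcj, one_smul] at h6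
  have hVspan : V = Submodule.span G (Set.range col) := by
    refine Submodule.eq_of_le_of_finrank_le hVle ?_
    have h7 : Module.finrank G (Submodule.span G (Set.range col)) ≤ d := by
      exact (by simpa [Fintype.card_fin] using (finrank_range_le_card (R := G) col : (Set.range col).finrank G ≤ _) : (Set.range col).finrank G ≤ d)
    exact h7.trans_eq hd
  -- Q and L
  set Q : Matrix (Fin n) (Fin d) R := U.submatrix id (Fin.castLE hdn) with hQ
  set L : Matrix (Fin d) (Fin n) R := (U⁻¹).submatrix (Fin.castLE hdn) id with hL
  have hLQ : L * Q = 1 := by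
    ext j k
    have h8 : (L * Q) j k = (U⁻¹ * U) (Fin.castLE hdn j) (Fin.castLE hdn k) := by
      simp [hL, hQ, Matrix.mul_apply, Matrix.submatrix]
    rw [h8, hUinv]
    simp [Matrix.one_apply, Fin.castLE_inj]
  -- linear independence
  have hind : LinearIndependent R Q.transpose := by
    refine Fintype.linearIndependent_iff.mpr ?_
    intro g hg
    have hQg : Q *ᵥ g = 0 := by
      funext i
      have h9 := congrFun hg i
      simpa [Matrix.mulVec, dotProduct, Finset.sum_apply, mul_comm] using h9
    intro j
    have h10 : (L * Q) *ᵥ g = L *ᵥ (Q *ᵥ g) := (Matrix.mulVec_mulVec _ _ _).symm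
    rw [hLQ, Matrix.one_mulVec, hQg, Matrix.mulVec_zero] at h10
    exact congrFun h10 j
  -- span equality
  have hcolf : ∀ j : Fin d, f (Q.transpose j) = col j := by
    intro j; funext i; rfl
  have hspan : Submodule.span R (Set.range Q.transpose) =
      Submodule.comap f (V.restrictScalars R) := by
    apply le_antisymm
    · refine Submodule.span_le.mpr ?_
      rintro - ⟨j, rfl⟩
      rw [SetLike.mem_coe, Submodule.mem_comap, Submodule.restrictScalars_mem, hVspan]
      rw [hcolf j]
      exact Submodule.subset_span ⟨j, rfl⟩
    · intro x hx
      rw [Submodule.mem_comap, Submodule.restrictScalars_mem] at hx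
      set y : Fin n → R := U⁻¹ *ᵥ x with hy
      have hxy : U *ᵥ y = x := by
        rw [hy, Matrix.mulVec_mulVec, hUinv', Matrix.one_mulVec]
      have hxV : f x ∈ Submodule.span G (Set.range col) := hVspan ▸ hx
      obtain ⟨g, hg⟩ := (mem_span_range_iff_exists_fun G).mp hxV
      set w : Fin n → G := fun i => if hh : (i : ℕ) < d then g ⟨i, hh⟩ else 0 with hwdef
      have hUw : (U.map φ) *ᵥ w = f x := by
        rw [hwdef, aux_mulVec_dite hdn (U.map φ) g]
        exact hg
      have hUy : (U.map φ) *ᵥ (φ ∘ y) = f x := by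
        funext k
        rw [← RingHom.map_mulVec φ U y k, hxy]
        rfl
      have hyw : (φ ∘ y) = w := by
        have h11 : ((U⁻¹).map φ) *ᵥ ((U.map φ) *ᵥ (φ ∘ y))
            = ((U⁻¹).map φ) *ᵥ ((U.map φ) *ᵥ w) := by rw [hUw, hUy]
        rwa [Matrix.mulVec_mulVec, Matrix.mulVec_mulVec, ← Matrix.map_mul, hUinv,
          Matrix.map_one φ (map_zero φ) (map_one φ), Matrix.one_mulVec,
          Matrix.one_mulVec] at h11
      have hy0 : ∀ i : Fin n, d ≤ (i : ℕ) → y i = 0 := by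
        intro i hi
        have h12 : φ (y i) = 0 := by
          have := congrFun hyw i
          rwa [show w i = 0 from dif_neg (not_lt.mpr hi)] at this
        exact IsFractionRing.injective R G (by rw [h12, map_zero])
      rw [← hxy]
      have h13 := aux_mulVec_mem_span hdn U y hy0
      have h14 : (fun j : Fin d => U.transpose (Fin.castLE hdn j)) = Q.transpose := rfl
      rwa [h14] at h13
  refine ⟨?_, d, Q, L, hLQ, hind, hspan⟩
  rw [← hspan]
  exact Module.Free.of_basis (Module.Basis.span hind)
end

section
/- Let R be an integral domain and Q ∈ R^{n×p}. If Q is left invertible over R, then for every non-unit r ∈ R and every Q' ∈ R^{n×p} with Q ≡ Q' mod r (entrywise r divides Q − Q'), the matrix Q' has R-linearly independent columns (full column rank over Frac(R)). -/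
theorem left_invertible_full_rank_mod_nonunit {R : Type*} [CommRing R] [IsDomain R]
    (n p : ℕ) (Q : Matrix (Fin n) (Fin p) R)
    (hL : ∃ L : Matrix (Fin p) (Fin n) R, L * Q = 1)
    (r : R) (hr : ¬ IsUnit r)
    (Q' D : Matrix (Fin n) (Fin p) R) (hD : Q - Q' = r • D) :
    LinearIndependent R Q'.transpose := by
  obtain ⟨L, hLQ⟩ := hL
  have hQ' : Q' = Q - r • D := by rw [← hD]; abel
  set A : Matrix (Fin p) (Fin p) R := L * Q' with hA
  have hAeq : A = 1 - r • (L * D) := by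
    rw [hA, hQ', Matrix.mul_sub, hLQ, Matrix.mul_smul]
  -- det A ≠ 0
  have hdet : A.det ≠ 0 := by
    intro h0
    set I := Ideal.span {r} with hI
    set f := Ideal.Quotient.mk I with hf
    have hfr : f r = 0 := Ideal.Quotient.eq_zero_iff_mem.mpr (Ideal.subset_span rfl)
    have hmap : A.map f = 1 := by
      rw [hAeq]
      ext i j
      simp [Matrix.map_apply, Matrix.sub_apply, Matrix.smul_apply, hfr, Matrix.one_apply]
    have h1 : (1 : R ⧸ I) = 0 := by
      have h2 : f A.det = (A.map ⇑f).det := RingHom.map_det f A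
      rw [h0, map_zero, hmap, Matrix.det_one] at h2
      exact h2.symm
    have : I = ⊤ := by
      rw [Ideal.eq_top_iff_one]
      have := Ideal.Quotient.eq_zero_iff_mem.mp h1
      exact this
    exact hr (Ideal.span_singleton_eq_top.mp this)
  refine (Fintype.linearIndependent_iff).mpr ?_
  intro g hg i
  have hvm : Matrix.vecMul g Q'.transpose = 0 := by
    ext j
    have := congrFun hg j
    simpa [Matrix.vecMul, dotProduct, Finset.sum_apply] using this
  have h2 : A.mulVec g = 0 := by
    have : Matrix.vecMul g (Q'.transpose * L.transpose) = 0 := by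
      rw [← Matrix.vecMul_vecMul, hvm, Matrix.zero_vecMul]
    rw [← Matrix.transpose_mul] at this
    rwa [Matrix.vecMul_transpose] at this
  have := Matrix.eq_zero_of_mulVec_eq_zero hdet h2
  exact congrFun this i
end

section
/- Let R be an elementary divisor domain and Q ∈ R^{n×p} with n ≥ p. If for every non-unit r ∈ R, every matrix Q' ∈ R^{n×p} congruent to Q modulo r has full column rank, then the GCD of all p×p minors of Q is a unit. -/
open Matrix Module Submodule in
lemma exists_minor_ne_zero_aux {K : Type*} [Field K] {n p : ℕ}
    (M : Matrix (Fin n) (Fin p) K) (h : LinearIndependent K M.transpose) :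
    ∃ f : Fin p → Fin n, Function.Injective f ∧ (M.submatrix f id).det ≠ 0 := by
  classical
  have hrk1 : M.rank = finrank K (span K (Set.range M.transpose)) :=
    M.rank_eq_finrank_span_cols
  have hrk2 : M.rank = finrank K (span K (Set.range M)) := M.rank_eq_finrank_span_row
  have hrows : finrank K (span K (Set.range M)) = p := by
    rw [← hrk2, hrk1]
    simpa using finrank_span_eq_card h
  obtain ⟨t, htsub, htspan, htind⟩ := exists_linearIndependent K (Set.range M)
  have htfin : t.Finite := (Set.finite_range M).subset htsub
  haveI := htfin.fintype
  have hcard : t.toFinset.card = p := by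
    rw [← finrank_span_set_eq_card htind, htspan, hrows]
  have hcard' : Fintype.card t = p := by rw [← Set.toFinset_card, hcard]
  let e : Fin p ≃ t := (Fintype.equivFinOfCardEq hcard').symm
  have hmem : ∀ i : Fin p, (e i : Fin p → K) ∈ Set.range M := fun i => htsub (e i).2
  choose f hf using fun i => hmem i
  refine ⟨f, ?_, ?_⟩
  · intro i j hij
    apply e.injective
    apply Subtype.ext
    rw [← hf i, ← hf j, hij]
  · have hrows' : (fun i => (M.submatrix f id) i) = fun i => ((e i : Fin p → K)) := by
      funext i
      ext j
      exact congrFun (hf i) j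
    have hli : LinearIndependent K (fun i => (M.submatrix f id) i) := by
      rw [hrows']
      exact htind.comp e e.injective
    have := Matrix.linearIndependent_rows_iff_isUnit.mp hli
    exact ((Matrix.isUnit_iff_isUnit_det _).mp this).ne_zero

theorem gcd_minors_unit_of_full_rank_mod {R : Type*} [CommRing R] [IsDomain R]
    (hEDD : ∀ (m n : ℕ) (A : Matrix (Fin m) (Fin n) R),
      ∃ (U : Matrix (Fin m) (Fin m) R) (V : Matrix (Fin n) (Fin n) R)
        (S : Matrix (Fin m) (Fin n) R),
        IsUnit U.det ∧ IsUnit V.det ∧ A = U * S * V ∧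
        (∀ (i : Fin m) (j : Fin n), (i : ℕ) ≠ (j : ℕ) → S i j = 0) ∧
        (∀ (i : Fin m) (j : Fin n) (i' : Fin m) (j' : Fin n),
          (i : ℕ) = (j : ℕ) → (i' : ℕ) = (i : ℕ) + 1 → (j' : ℕ) = (j : ℕ) + 1 →
          S i j ∣ S i' j'))
    (n p : ℕ) (hnp : p ≤ n) (Q : Matrix (Fin n) (Fin p) R)
    (hfull : ∀ r : R, ¬ IsUnit r →
      ∀ Q' D : Matrix (Fin n) (Fin p) R, Q - Q' = r • D →
        LinearIndependent R Q'.transpose) :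
    ∀ d : R, (∀ f : Fin p → Fin n, Function.Injective f → d ∣ (Q.submatrix f id).det) →
      IsUnit d := by
  classical
  intro d hd
  rcases Nat.eq_zero_or_pos p with hp0 | hp
  · subst hp0
    have h1 : d ∣ (Q.submatrix Fin.elim0 id).det := hd Fin.elim0 (fun a => a.elim0)
    rwa [Matrix.det_fin_zero, isUnit_iff_dvd_one.symm] at h1
  obtain ⟨U, V, S, hU, hV, hQ, hSoff, hSchain⟩ := hEDD n p Q
  set jl : Fin p := ⟨p - 1, by omega⟩ with hjl
  set il : Fin n := ⟨p - 1, by omega⟩ with hil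
  -- Step A: the last diagonal entry of S is a unit
  have hsunit : IsUnit (S il jl) := by
    by_contra hs
    set S' : Matrix (Fin n) (Fin p) R := fun i j => if i = il ∧ j = jl then 0 else S i j
      with hS'
    set E : Matrix (Fin n) (Fin p) R := fun i j => if i = il ∧ j = jl then 1 else 0 with hE
    have hSE : S - S' = S il jl • E := by
      ext i j
      by_cases h : i = il ∧ j = jl
      · obtain ⟨rfl, rfl⟩ := h
        rw [Matrix.sub_apply, Matrix.smul_apply]
        simp [hS', hE]
      · rw [Matrix.sub_apply, Matrix.smul_apply]
        simp [hS', hE, h]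
    have hdiff : Q - U * S' * V = S il jl • (U * E * V) := by
      rw [hQ]
      calc U * S * V - U * S' * V = U * (S - S') * V := by
            rw [Matrix.mul_sub, Matrix.sub_mul]
        _ = S il jl • (U * E * V) := by
            rw [hSE, Matrix.mul_smul, Matrix.smul_mul]
    have hli := hfull (S il jl) hs (U * S' * V) (U * E * V) hdiff
    haveI : Invertible V := V.invertibleOfIsUnitDet hV
    set w : Fin p → R := (⅟V).mulVec (Pi.single jl 1) with hw
    have hVw : V.mulVec w = Pi.single jl 1 := by
      rw [hw, Matrix.mulVec_mulVec, mul_invOf_self, Matrix.one_mulVec]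
    have hScol : ∀ k, S' k jl = 0 := by
      intro k
      by_cases hk : k = il
      · simp [hS', hk]
      · have hne : (k : ℕ) ≠ (jl : ℕ) := fun h => hk (Fin.ext h)
        simp [hS', hk, hSoff k jl hne]
    have hQ'w : (U * S' * V).mulVec w = 0 := by
      rw [← Matrix.mulVec_mulVec, hVw, Matrix.mulVec_single_one]
      funext i
      rw [Matrix.col_apply, Matrix.mul_apply]
      rw [Finset.sum_congr rfl (fun k _ => by rw [hScol k, mul_zero])]
      simp
    replace hli := Fintype.linearIndependent_iff.mp hli
    have hw0 : ∀ j, w j = 0 := by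
      apply hli
      funext i
      rw [Finset.sum_apply]
      have hterm : ∀ j : Fin p, (w j • (U * S' * V).transpose j) i
          = (U * S' * V) i j * w j := fun j => by
        rw [Pi.smul_apply, Matrix.transpose_apply, smul_eq_mul, mul_comm]
      rw [Finset.sum_congr rfl (fun j _ => hterm j)]
      have h0 := congrFun hQ'w i
      simp only [Matrix.mulVec, dotProduct] at h0
      simpa using h0
    have h1 : (Pi.single jl (1:R) : Fin p → R) jl = 0 := by
      rw [← hVw]
      simp only [Matrix.mulVec, dotProduct]
      rw [Finset.sum_congr rfl (fun j _ => by rw [hw0 j, mul_zero])]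
      simp
    simp at h1
  -- Step B: all diagonal entries of S are units
  have hdvd : ∀ k j (hj : j < p), j + k = p - 1 →
      S ⟨j, lt_of_lt_of_le hj hnp⟩ ⟨j, hj⟩ ∣ S il jl := by
    intro k
    induction k with
    | zero =>
      intro j hj hjk
      have h1 : (⟨j, lt_of_lt_of_le hj hnp⟩ : Fin n) = il := Fin.ext (by simpa using hjk)
      have h2 : (⟨j, hj⟩ : Fin p) = jl := Fin.ext (by simpa using hjk)
      rw [h1, h2]
    | succ k ih =>
      intro j hj hjk
      have hj1 : j + 1 < p := by omega
      have hstep : S ⟨j, lt_of_lt_of_le hj hnp⟩ ⟨j, hj⟩ ∣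
          S ⟨j + 1, lt_of_lt_of_le hj1 hnp⟩ ⟨j + 1, hj1⟩ :=
        hSchain _ _ _ _ rfl rfl rfl
      exact hstep.trans (ih (j + 1) hj1 (by omega))
  have hdiagunit : ∀ j : Fin p, IsUnit (S ⟨j, lt_of_lt_of_le j.2 hnp⟩ j) := by
    intro j
    have := hdvd (p - 1 - j) j j.2 (by omega)
    exact isUnit_of_dvd_unit (by simpa using this) hsunit
  -- Step C: quotient field argument
  by_contra hd'
  obtain ⟨m, hm, hdm⟩ := exists_max_ideal_of_mem_nonunits (mem_nonunits_iff.mpr hd')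
  haveI := hm
  letI : Field (R ⧸ m) := Ideal.Quotient.field m
  set π : R →+* R ⧸ m := Ideal.Quotient.mk m with hπ
  have hmap : Q.map π = U.map π * S.map π * V.map π := by
    rw [hQ, Matrix.map_mul, Matrix.map_mul]
  have hUu : IsUnit (U.map π) := by
    rw [Matrix.isUnit_iff_isUnit_det]
    have h := (RingHom.map_det π U).symm
    rw [RingHom.mapMatrix_apply] at h
    rw [h]
    exact hU.map π
  have hVu : IsUnit (V.map π) := by
    rw [Matrix.isUnit_iff_isUnit_det]
    have h := (RingHom.map_det π V).symm
    rw [RingHom.mapMatrix_apply] at h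
    rw [h]
    exact hV.map π
  have hinj : ∀ v : Fin p → R ⧸ m, (Q.map π).mulVec v = 0 → v = 0 := by
    intro v hv
    rw [hmap, ← Matrix.mulVec_mulVec, ← Matrix.mulVec_mulVec] at hv
    have hSx : (S.map π).mulVec ((V.map π).mulVec v) = 0 := by
      have := Matrix.mulVec_injective_iff_isUnit.mpr hUu
      apply this
      rw [hv, Matrix.mulVec_zero]
    have hx0 : (V.map π).mulVec v = 0 := by
      funext j
      have hji : (j : ℕ) < n := lt_of_lt_of_le j.2 hnp
      have h0 := congrFun hSx ⟨j, hji⟩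
      rw [Matrix.mulVec, dotProduct] at h0
      have hsum : ∑ k, (S.map π) ⟨(j:ℕ), hji⟩ k * (V.map π).mulVec v k
          = (S.map π) ⟨(j:ℕ), hji⟩ j * (V.map π).mulVec v j := by
        apply Finset.sum_eq_single
        · intro k _ hkj
          have : ((⟨(j:ℕ), hji⟩ : Fin n) : ℕ) ≠ (k : ℕ) := by
            simpa using fun h => hkj (Fin.ext h.symm)
          rw [Matrix.map_apply, hSoff _ _ this, map_zero, zero_mul]
        · intro h; exact absurd (Finset.mem_univ j) h
      rw [hsum] at h0
      have hu : IsUnit ((S.map π) ⟨(j:ℕ), hji⟩ j) := by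
        rw [Matrix.map_apply]
        exact (hdiagunit j).map π
      have := h0
      rcases mul_eq_zero.mp this with h | h
      · exact absurd h hu.ne_zero
      · exact h
    have := Matrix.mulVec_injective_iff_isUnit.mpr hVu
    apply this
    rw [hx0, Matrix.mulVec_zero]
  have hliK : LinearIndependent (R ⧸ m) (Q.map π).transpose := by
    refine Fintype.linearIndependent_iff.mpr ?_
    intro g hg
    have : (Q.map π).mulVec g = 0 := by
      funext i
      have := congrFun hg i
      rw [Matrix.mulVec, dotProduct]
      simpa [Matrix.transpose_apply, mul_comm] using this
    intro j
    exact congrFun (hinj g this) j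
  obtain ⟨f, hfinj, hdet⟩ := exists_minor_ne_zero_aux (Q.map π) hliK
  apply hdet
  have hsub : (Q.map π).submatrix f id = (Q.submatrix f id).map π := rfl
  have h := (RingHom.map_det π (Q.submatrix f id)).symm
  rw [RingHom.mapMatrix_apply] at h
  rw [hsub, h]
  obtain ⟨c, hc⟩ := hd f hfinj
  rw [hc, map_mul, Ideal.Quotient.eq_zero_iff_mem.mpr hdm, zero_mul]
end

section
/- Let R be an elementary divisor domain and Q ∈ R^{n×p}. If the GCD of all p×p minors of Q is a unit, then Q has a trivial Smith form, i.e., Q = U S V with U, V unimodular and S = [I_p; 0], and consequently Q is left invertible over R. -/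
theorem trivial_smith_form_of_gcd_minors_unit {R : Type*} [CommRing R] [IsDomain R]
    (hEDD : ∀ (m n : ℕ) (A : Matrix (Fin m) (Fin n) R),
      ∃ (U : Matrix (Fin m) (Fin m) R) (V : Matrix (Fin n) (Fin n) R)
        (S : Matrix (Fin m) (Fin n) R),
        IsUnit U.det ∧ IsUnit V.det ∧ A = U * S * V ∧
        (∀ (i : Fin m) (j : Fin n), (i : ℕ) ≠ (j : ℕ) → S i j = 0) ∧
        (∀ (i : Fin m) (j : Fin n) (i' : Fin m) (j' : Fin n),
          (i : ℕ) = (j : ℕ) → (i' : ℕ) = (i : ℕ) + 1 → (j' : ℕ) = (j : ℕ) + 1 →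
          S i j ∣ S i' j'))
    (n p : ℕ) (Q : Matrix (Fin n) (Fin p) R)
    (hgcd : ∀ d : R,
      (∀ f : Fin p → Fin n, Function.Injective f → d ∣ (Q.submatrix f id).det) → IsUnit d) :
    (∃ (U : Matrix (Fin n) (Fin n) R) (V : Matrix (Fin p) (Fin p) R),
      IsUnit U.det ∧ IsUnit V.det ∧
      Q = U * (Matrix.of fun (i : Fin n) (j : Fin p) =>
        if (i : ℕ) = (j : ℕ) then (1 : R) else 0) * V) ∧
    ∃ L : Matrix (Fin p) (Fin n) R, L * Q = 1 := by
  -- first, p ≤ n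
  have hpn : p ≤ n := by
    by_contra h
    push_neg at h
    have : IsUnit (0 : R) := by
      apply hgcd
      intro f hf
      exact absurd (Fintype.card_le_of_injective f hf) (by simpa using h)
    simpa using this.ne_zero
  obtain ⟨U, V, S, hU, hV, hQ, hS, _⟩ := hEDD n p Q
  set S₀ : Matrix (Fin n) (Fin p) R :=
    Matrix.of fun (i : Fin n) (j : Fin p) => if (i : ℕ) = (j : ℕ) then (1 : R) else 0 with hS₀
  set D : Matrix (Fin p) (Fin p) R :=
    Matrix.diagonal (fun j => S (Fin.castLE hpn j) j) with hD
  -- S decomposes as S₀ * D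
  have hSdec : S = S₀ * D := by
    ext i j
    rw [Matrix.mul_apply]
    by_cases hij : (i : ℕ) = (j : ℕ)
    · rw [Finset.sum_eq_single j]
      · have hcast : Fin.castLE hpn j = i := by ext; simp [hij]
        simp [hS₀, hD, Matrix.diagonal, hij, hcast]
      · intro k _ hk
        have : (i : ℕ) ≠ (k : ℕ) := by
          intro h; exact hk (Fin.ext (by omega))
        simp [hS₀, hD, Matrix.diagonal, this, Ne.symm hk]
      · intro h; exact absurd (Finset.mem_univ j) h
    · rw [hS i j hij]
      apply (Finset.sum_eq_zero _).symm
      intro k _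
      by_cases hik : (i : ℕ) = (k : ℕ)
      · have hkj : k ≠ j := by
          intro h; exact hij (h ▸ hik)
        simp [hS₀, hD, Matrix.diagonal, hkj]
      · simp [hS₀, hik]
  have hQ' : Q = (U * S₀) * (D * V) := by
    rw [hQ, hSdec, ← Matrix.mul_assoc U S₀ D, Matrix.mul_assoc (U * S₀) D V]
  -- the product of the diagonal entries divides every p×p minor
  set d : R := ∏ j : Fin p, S (Fin.castLE hpn j) j with hd
  have hdet_D : D.det = d := by simp [hD, hd]
  have hdunit : IsUnit d := by
    apply hgcd
    intro f hf
    have hsub : Q.submatrix f id = ((U * S₀).submatrix f id) * (D * V) := by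
      ext i j
      simp [hQ', Matrix.submatrix_apply, Matrix.mul_apply]
    rw [hsub, Matrix.det_mul, Matrix.det_mul, hdet_D]
    exact ⟨((U * S₀).submatrix f id).det * V.det, by ring⟩
  have hDdet : IsUnit D.det := hdet_D ▸ hdunit
  have hDV : IsUnit (D * V).det := by
    rw [Matrix.det_mul]; exact hDdet.mul hV
  -- first conjunct
  refine ⟨⟨U, D * V, hU, hDV, by rw [hQ']⟩, ?_⟩
  -- left inverse
  set W : Matrix (Fin p) (Fin p) R := D * V with hW
  have hS₀tS₀ : S₀.transpose * S₀ = 1 := by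
    ext j k
    rw [Matrix.mul_apply]
    rw [Finset.sum_eq_single (Fin.castLE hpn j)]
    · by_cases hjk : j = k
      · simp [hS₀, hjk, Matrix.one_apply]
      · have : ((Fin.castLE hpn j : Fin n) : ℕ) ≠ (k : ℕ) := by
          simp only [Fin.coe_castLE]
          intro h; exact hjk (Fin.ext h)
        simp only [hS₀, Matrix.transpose_apply, Matrix.of_apply, this, if_false,
          Matrix.one_apply_ne hjk, mul_zero]
    · intro i _ hi
      have : (i : ℕ) ≠ (j : ℕ) := by
        intro h; exact hi (Fin.ext (by simp [h]))
      simp [hS₀, Matrix.transpose_apply, this]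
    · intro h; exact absurd (Finset.mem_univ _) h
  refine ⟨W⁻¹ * S₀.transpose * U⁻¹, ?_⟩
  have hUinv : U⁻¹ * U = 1 := Matrix.nonsing_inv_mul U hU
  have hWinv : W⁻¹ * W = 1 := Matrix.nonsing_inv_mul W hDV
  calc W⁻¹ * S₀.transpose * U⁻¹ * Q
      = W⁻¹ * (S₀.transpose * (U⁻¹ * U * (S₀ * W))) := by
        rw [hQ']; simp only [Matrix.mul_assoc]
    _ = 1 := by
        rw [hUinv, Matrix.one_mul, ← Matrix.mul_assoc S₀.transpose, hS₀tS₀,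
          Matrix.one_mul, hWinv]
end

section
/- Let R be an elementary divisor domain with field of fractions G and Q ∈ R^{n×p} a matrix with full column rank over G. If for every a ∈ G^p with Q a ∈ R^n one has a ∈ R^p, then for every non-unit r ∈ R and every Q' ∈ R^{n×p} with Q ≡ Q' mod r, the matrix Q' has full column rank. -/
open Matrix

theorem full_rank_mod_of_integral_solutions {R : Type*} [CommRing R] [IsDomain R]
    (hEDD : ∀ (m n : ℕ) (A : Matrix (Fin m) (Fin n) R),
      ∃ (U : Matrix (Fin m) (Fin m) R) (V : Matrix (Fin n) (Fin n) R)
        (S : Matrix (Fin m) (Fin n) R),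
        IsUnit U.det ∧ IsUnit V.det ∧ A = U * S * V ∧
        (∀ (i : Fin m) (j : Fin n), (i : ℕ) ≠ (j : ℕ) → S i j = 0) ∧
        (∀ (i : Fin m) (j : Fin n) (i' : Fin m) (j' : Fin n),
          (i : ℕ) = (j : ℕ) → (i' : ℕ) = (i : ℕ) + 1 → (j' : ℕ) = (j : ℕ) + 1 →
          S i j ∣ S i' j'))
    (n p : ℕ) (Q : Matrix (Fin n) (Fin p) R)
    (hQrank : LinearIndependent R Q.transpose)
    (hint : ∀ a : Fin p → FractionRing R,
      (∀ i : Fin n, ∃ r : R,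
        (Q.map (algebraMap R (FractionRing R))).mulVec a i = algebraMap R (FractionRing R) r) →
      ∀ j : Fin p, ∃ r : R, a j = algebraMap R (FractionRing R) r) :
    ∀ r : R, ¬ IsUnit r →
      ∀ Q' D : Matrix (Fin n) (Fin p) R, Q - Q' = r • D →
        LinearIndependent R Q'.transpose := by
  intro r hr Q' D hQD
  by_cases hr0 : r = 0
  · subst hr0
    rw [zero_smul, sub_eq_zero] at hQD
    exact hQD ▸ hQrank
  by_contra hlin
  obtain ⟨g, hsum, i₀, hg⟩ := Fintype.not_linearIndependent_iff.mp hlin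
  have hp : 0 < p := i₀.pos
  have hmul : Q'.mulVec g = 0 := by
    funext j
    have := congrFun hsum j
    simpa [Matrix.mulVec, dotProduct, mul_comm, Finset.sum_apply] using this
  obtain ⟨U, V, S, hU, hV, hA, hSdiag, -⟩ := hEDD p 1 (fun i _ => g i)
  set i0 : Fin p := ⟨0, hp⟩ with hi0
  set e : R := S i0 0 * V 0 0 with he
  set u : Fin p → R := fun i => U i i0 with hu
  have hc : ∀ i, g i = u i * e := by
    intro i
    have h := congrFun (congrFun hA i) (0 : Fin 1)
    rw [Matrix.mul_apply] at h
    simp only [Fin.sum_univ_one] at h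
    rw [Matrix.mul_apply] at h
    have hsingle : ∑ j, U i j * S j 0 = U i i0 * S i0 0 := by
      refine Finset.sum_eq_single i0 ?_ (by simp)
      intro b _ hb
      have : (b : ℕ) ≠ ((0 : Fin 1) : ℕ) := by
        intro hb'
        exact hb (Fin.ext (by simpa using hb'))
      rw [hSdiag b 0 this, mul_zero]
    rw [hsingle] at h
    rw [h, he, hu, mul_assoc]
  have he0 : e ≠ 0 := by
    intro h0
    exact hg (by rw [hc i₀, h0, mul_zero])
  have hmu : Q'.mulVec u = 0 := by
    funext j
    have h : (Q'.mulVec g) j = 0 := by rw [hmul]; rfl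
    have heq : (Q'.mulVec u j) * e = (Q'.mulVec g) j := by
      simp only [Matrix.mulVec, dotProduct, Finset.sum_mul]
      refine Finset.sum_congr rfl fun i _ => ?_
      rw [hc i]; ring
    rcases mul_eq_zero.mp (heq.trans h) with h' | h'
    · exact h'
    · exact absurd h' he0
  have hQ : Q = Q' + r • D := by rw [← hQD]; abel
  have hQu : Q.mulVec u = r • D.mulVec u := by
    rw [hQ, Matrix.add_mulVec, hmu, zero_add, Matrix.smul_mulVec]
  set φ := algebraMap R (FractionRing R) with hφ
  have hφinj : Function.Injective φ := IsFractionRing.injective R (FractionRing R)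
  have hφr : φ r ≠ 0 := fun h => hr0 (hφinj (by simpa using h))
  set a : Fin p → FractionRing R := fun j => φ (u j) / φ r with ha
  have key : ∀ i, (Q.map φ).mulVec a i = φ (D.mulVec u i) := by
    intro i
    have h1 : (Q.map φ).mulVec a i = φ (Q.mulVec u i) / φ r := by
      simp only [Matrix.mulVec, dotProduct, Matrix.map_apply, ha, map_sum,
        Finset.sum_div]
      refine Finset.sum_congr rfl fun j _ => ?_
      rw [_root_.map_mul]
      ring
    rw [h1]
    have h2 := congrFun hQu i
    simp only [Pi.smul_apply, smul_eq_mul] at h2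
    rw [h2, _root_.map_mul]; field_simp
  have hdvd : ∀ j, r ∣ u j := by
    intro j
    obtain ⟨s, hs⟩ := hint a (fun i => ⟨D.mulVec u i, key i⟩) j
    refine ⟨s, hφinj ?_⟩
    rw [_root_.map_mul]
    rw [ha] at hs
    field_simp at hs
    rw [hs]
  have hrdet : r ∣ U.det := by
    have h := congrFun (congrFun (Matrix.adjugate_mul U) i0) i0
    simp only [Matrix.smul_apply, Matrix.one_apply_eq, smul_eq_mul, mul_one] at h
    rw [Matrix.mul_apply] at h
    rw [← h]
    exact Finset.dvd_sum fun k _ => Dvd.dvd.mul_left (hdvd k) _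
  exact hr (isUnit_of_dvd_unit hrdet hU)
end
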